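/- arXiv:1304.4672 — 5 statements merged into one kernel-verified Lean document; each statement's English description precedes it below -/
import Mathlib

section
/- Let U₁ ⊂ R^{n₁} and U₂ ⊂ R^{n₂} be subspaces of dimensions d₁ and d₂. Let S' be the span of all outer products u⊗w with u ∈ U₁, w ∈ U₂ (viewed as vectors in R^{n₁n₂} via vectorization). Then μ(S') ≤ μ(U₁)·μ(U₂). -/
noncomputable def coh {ι : Type*} [Fintype ι] [DecidableEq ι]
    (U : Submodule ℝ (EuclideanSpace ℝ ι)) : ℝ :=
  ((Fintype.card ι : ℝ) / (Module.finrank ℝ U : ℝ)) *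
    ⨆ j : ι, ‖(U.orthogonalProjectionOnto (EuclideanSpace.single j 1) : EuclideanSpace ℝ ι)‖ ^ 2


open EuclideanSpace

noncomputable def tensP {ι κ : Type*} [Fintype ι] [Fintype κ]
    (a : EuclideanSpace ℝ ι) (b : EuclideanSpace ℝ κ) : EuclideanSpace ℝ (ι × κ) :=
  WithLp.toLp 2 (fun p : ι × κ => a p.1 * b p.2)

lemma tensP_inner {ι κ : Type*} [Fintype ι] [Fintype κ]
    (a c : EuclideanSpace ℝ ι) (b d : EuclideanSpace ℝ κ) :
    (inner ℝ (tensP a b) (tensP c d) : ℝ) = inner ℝ a c * inner ℝ b d := by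
  simp only [PiLp.inner_apply, RCLike.inner_apply, conj_trivial, tensP]
  rw [Fintype.sum_prod_type, Finset.sum_mul_sum]
  exact Finset.sum_congr rfl fun i _ => Finset.sum_congr rfl fun j _ => by ring

lemma tensP_norm_sq {ι κ : Type*} [Fintype ι] [Fintype κ]
    (a : EuclideanSpace ℝ ι) (b : EuclideanSpace ℝ κ) :
    ‖tensP a b‖ ^ 2 = ‖a‖ ^ 2 * ‖b‖ ^ 2 := by
  rw [← real_inner_self_eq_norm_sq, ← real_inner_self_eq_norm_sq,
    ← real_inner_self_eq_norm_sq, tensP_inner]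

lemma proj_tensP {ι κ : Type*} [Fintype ι] [Fintype κ] [DecidableEq ι] [DecidableEq κ]
    (U₁ : Submodule ℝ (EuclideanSpace ℝ ι)) (U₂ : Submodule ℝ (EuclideanSpace ℝ κ))
    (S' : Submodule ℝ (EuclideanSpace ℝ (ι × κ)))
    (hS' : S' = Submodule.span ℝ
      {z : EuclideanSpace ℝ (ι × κ) | ∃ u ∈ U₁, ∃ w ∈ U₂, z = WithLp.toLp 2 (fun p => u p.1 * w p.2)})
    (j₁ : ι) (j₂ : κ) :
    (S'.orthogonalProjectionOnto (EuclideanSpace.single (j₁, j₂) 1) : EuclideanSpace ℝ (ι × κ)) =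
      tensP (U₁.orthogonalProjectionOnto (EuclideanSpace.single j₁ 1) : EuclideanSpace ℝ ι)
        (U₂.orthogonalProjectionOnto (EuclideanSpace.single j₂ 1) : EuclideanSpace ℝ κ) := by
  set a := (U₁.orthogonalProjectionOnto (EuclideanSpace.single j₁ 1) : EuclideanSpace ℝ ι)
  set b := (U₂.orthogonalProjectionOnto (EuclideanSpace.single j₂ 1) : EuclideanSpace ℝ κ)
  rw [← Submodule.starProjection_apply]
  apply Submodule.eq_starProjection_of_mem_of_inner_eq_zero
  · rw [hS']
    exact Submodule.subset_span ⟨a, (U₁.orthogonalProjectionOnto _).2, b,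
      (U₂.orthogonalProjectionOnto _).2, rfl⟩
  · intro w hw
    rw [hS'] at hw
    induction hw using Submodule.span_induction with
    | mem z hz =>
      obtain ⟨u, hu, v, hv, rfl⟩ := hz
      have h1 : (inner ℝ (EuclideanSpace.single (j₁, j₂) (1:ℝ)) (tensP u v) : ℝ) = u j₁ * v j₂ := by
        rw [EuclideanSpace.inner_single_left]; simp [tensP]
      have h2 : (inner ℝ (tensP a b) (tensP u v) : ℝ) = u j₁ * v j₂ := by
        rw [tensP_inner]
        have ha : (inner ℝ (EuclideanSpace.single j₁ (1:ℝ) - a) u : ℝ) = 0 :=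
          Submodule.starProjection_inner_eq_zero _ u hu
        have hb : (inner ℝ (EuclideanSpace.single j₂ (1:ℝ) - b) v : ℝ) = 0 :=
          Submodule.starProjection_inner_eq_zero _ v hv
        rw [inner_sub_left, sub_eq_zero] at ha hb
        rw [← ha, ← hb, EuclideanSpace.inner_single_left, EuclideanSpace.inner_single_left]
        simp
      show (inner ℝ (EuclideanSpace.single (j₁, j₂) (1:ℝ) - tensP a b) (tensP u v) : ℝ) = 0
      rw [inner_sub_left, h1, h2, sub_self]
    | zero => exact inner_zero_right _
    | add y z hy hz hy' hz' => rw [inner_add_right, hy', hz', add_zero]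
    | smul c y hy hy' => rw [inner_smul_right, hy', mul_zero]

lemma ciSup_prod_mul_le {ι κ : Type*} [Fintype ι] [Fintype κ]
    (f : ι → ℝ) (g : κ → ℝ) (hf : ∀ i, 0 ≤ f i) (hg : ∀ j, 0 ≤ g j) :
    (⨆ p : ι × κ, f p.1 * g p.2) ≤ (⨆ i, f i) * ⨆ j, g j := by
  have hf0 : 0 ≤ ⨆ i, f i := Real.iSup_nonneg hf
  have hg0 : 0 ≤ ⨆ j, g j := Real.iSup_nonneg hg
  rcases isEmpty_or_nonempty (ι × κ) with h | h
  · rw [Real.iSup_of_isEmpty]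
    exact mul_nonneg hf0 hg0
  · have : Nonempty ι := ⟨h.some.1⟩
    have : Nonempty κ := ⟨h.some.2⟩
    refine ciSup_le fun p => mul_le_mul ?_ ?_ (hg p.2) hf0
    · exact le_ciSup (Set.Finite.bddAbove (Set.finite_range f)) p.1
    · exact le_ciSup (Set.Finite.bddAbove (Set.finite_range g)) p.2

/-- the span `S'` of all vectorized outer products `u ⊗ w`, for
`u ∈ U₁ ⊆ ℝ^{n₁}` and `w ∈ U₂ ⊆ ℝ^{n₂}` (a subspace of `ℝ^{n₁ n₂}`, indexed by
pairs, of dimension `d₁ d₂`), satisfies `μ(S') ≤ μ(U₁) μ(U₂)`. -/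
theorem coherence_outer_product_span {n₁ n₂ d₁ d₂ : ℕ}
    (U₁ : Submodule ℝ (EuclideanSpace ℝ (Fin n₁)))
    (U₂ : Submodule ℝ (EuclideanSpace ℝ (Fin n₂)))
    (h₁ : Module.finrank ℝ U₁ = d₁) (h₂ : Module.finrank ℝ U₂ = d₂)
    (S' : Submodule ℝ (EuclideanSpace ℝ (Fin n₁ × Fin n₂)))
    (hS' : S' = Submodule.span ℝ
      {z : EuclideanSpace ℝ (Fin n₁ × Fin n₂) |
        ∃ u ∈ U₁, ∃ w ∈ U₂, z = WithLp.toLp 2 (fun p => u p.1 * w p.2)})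
    (hdim : Module.finrank ℝ S' = d₁ * d₂) :
    coh S' ≤ coh U₁ * coh U₂ := by
  set f := fun j : Fin n₁ =>
    ‖(U₁.orthogonalProjectionOnto (EuclideanSpace.single j 1) : EuclideanSpace ℝ (Fin n₁))‖ ^ 2 with hf
  set g := fun j : Fin n₂ =>
    ‖(U₂.orthogonalProjectionOnto (EuclideanSpace.single j 1) : EuclideanSpace ℝ (Fin n₂))‖ ^ 2 with hg
  have key : ∀ p : Fin n₁ × Fin n₂,
      ‖(S'.orthogonalProjectionOnto (EuclideanSpace.single p 1) :
        EuclideanSpace ℝ (Fin n₁ × Fin n₂))‖ ^ 2 = f p.1 * g p.2 := by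
    intro p
    rw [show p = (p.1, p.2) from rfl, proj_tensP U₁ U₂ S' hS' p.1 p.2, tensP_norm_sq]
  unfold coh
  rw [h₁, h₂, hdim]
  simp only [Fintype.card_prod, Fintype.card_fin, key]
  have hfn : ∀ i, 0 ≤ f i := fun i => sq_nonneg _
  have hgn : ∀ i, 0 ≤ g i := fun i => sq_nonneg _
  have hC : (0:ℝ) ≤ ((n₁ * n₂ : ℕ) : ℝ) / ((d₁ * d₂ : ℕ) : ℝ) := by positivity
  calc ((n₁ * n₂ : ℕ) : ℝ) / ((d₁ * d₂ : ℕ) : ℝ) * ⨆ p : Fin n₁ × Fin n₂, f p.1 * g p.2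
      ≤ ((n₁ * n₂ : ℕ) : ℝ) / ((d₁ * d₂ : ℕ) : ℝ) * ((⨆ i, f i) * ⨆ j, g j) :=
        mul_le_mul_of_nonneg_left (ciSup_prod_mul_le f g hfn hgn) hC
    _ = (↑n₁ / ↑d₁ * ⨆ i, f i) * (↑n₂ / ↑d₂ * ⨆ j, g j) := by
        push_cast; field_simp
end

section
/- Let v ∈ R^n and let Ω be a multiset of m indices drawn uniformly at random from [n] with replacement. Then with probability at least 1 − 2δ, (1−α)(m/n)||v||₂² ≤ ||v_Ω||₂² ≤ (1+α)(m/n)||v||₂², where α = sqrt(2μ(v)log(1/δ)/m) + (2μ(v)/(3m))log(1/δ) and μ(v) = n||v||_∞²/||v||₂². -/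
open MeasureTheory Finset
open scoped ENNReal

noncomputable def muVec {ι : Type*} [Fintype ι] (v : EuclideanSpace ℝ ι) : ℝ :=
  (Fintype.card ι : ℝ) * (⨆ j : ι, |v j|) ^ 2 / ‖v‖ ^ 2

private lemma nonneg_of_deriv (f f' : ℝ → ℝ) (hder : ∀ y, HasDerivAt f (f' y) y)
    (hf0 : f 0 = 0) (hf' : ∀ y, 0 ≤ y → 0 ≤ f' y) :
    ∀ x, 0 ≤ x → 0 ≤ f x := by
  have hdiff : Differentiable ℝ f := fun y => (hder y).differentiableAt
  have hmono : MonotoneOn f (Set.Ici 0) := by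
    apply monotoneOn_of_deriv_nonneg (convex_Ici 0) hdiff.continuous.continuousOn
      (fun y _ => (hdiff y).differentiableWithinAt)
    intro y hy
    rw [(hder y).deriv]
    exact hf' y (le_of_lt (by simpa using hy))
  intro x hx
  have := hmono (Set.self_mem_Ici) (Set.mem_Ici.2 hx) hx
  rwa [hf0] at this

private lemma exp_neg_quad (u : ℝ) (hu : 0 ≤ u) : Real.exp (-u) ≤ 1 - u + u ^ 2 / 2 := by
  have key := nonneg_of_deriv (fun x => 1 - x + x ^ 2 / 2 - Real.exp (-x))
    (fun x => -1 + x + Real.exp (-x)) ?_ (by norm_num) ?_ u hu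
  · linarith [key]
  · intro y
    have h1 : HasDerivAt (fun x : ℝ => Real.exp (-x)) (Real.exp (-y) * (-1)) y :=
      (hasDerivAt_neg y).exp
    have h2 : HasDerivAt (fun x : ℝ => 1 - x + x ^ 2 / 2)
        (-1 + (2 : ℕ) * y ^ 1 / 2) y :=
      ((hasDerivAt_id y).const_sub 1).add ((hasDerivAt_pow 2 y).div_const 2)
    have := h2.sub h1
    refine this.congr_deriv ?_
    push_cast
    ring
  · intro y hy
    show 0 ≤ -1 + y + Real.exp (-y)
    have := Real.add_one_le_exp (-y)
    linarith

private lemma g_nonneg (u : ℝ) (hu : 0 ≤ u) : 0 ≤ 1 + (u - 1) * Real.exp u := by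
  have h1 : 1 - u ≤ Real.exp (-u) := by linarith [Real.add_one_le_exp (-u)]
  have h2 : (1 - u) * Real.exp u ≤ Real.exp (-u) * Real.exp u :=
    mul_le_mul_of_nonneg_right h1 (Real.exp_pos u).le
  rw [← Real.exp_add] at h2
  simp at h2
  nlinarith

private lemma phi_ineq (u : ℝ) (hu : 0 ≤ u) :
    (Real.exp u - 1 - u) * (1 - u / 3) ≤ u ^ 2 / 2 := by
  have hderF : ∀ y : ℝ, HasDerivAt
      (fun x : ℝ => x ^ 2 / 2 - (Real.exp x - 1 - x) * (1 - x / 3))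
      (y - ((Real.exp y - 1) * (1 - y / 3) - (Real.exp y - 1 - y) / 3)) y := by
    intro y
    have hsq : HasDerivAt (fun x : ℝ => x ^ 2 / 2) ((2:ℕ) * y ^ 1 / 2) y :=
      (hasDerivAt_pow 2 y).div_const 2
    have h1 : HasDerivAt (fun x : ℝ => Real.exp x - 1 - x) (Real.exp y - 1) y := by
      have := ((Real.hasDerivAt_exp y).sub_const 1).sub (hasDerivAt_id y)
      exact this
    have h2 : HasDerivAt (fun x : ℝ => 1 - x / 3) (-(1/3)) y := by
      have := ((hasDerivAt_id y).div_const 3).const_sub 1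
      simpa using this
    have := hsq.sub (h1.mul h2)
    refine this.congr_deriv ?_
    push_cast
    ring
  have hderH : ∀ y : ℝ, HasDerivAt
      (fun x : ℝ => x - ((Real.exp x - 1) * (1 - x / 3) - (Real.exp x - 1 - x) / 3))
      ((1 + (y - 1) * Real.exp y) / 3) y := by
    intro y
    have h1 : HasDerivAt (fun x : ℝ => Real.exp x - 1) (Real.exp y) y :=
      (Real.hasDerivAt_exp y).sub_const 1
    have h2 : HasDerivAt (fun x : ℝ => 1 - x / 3) (-(1/3)) y := by
      have := ((hasDerivAt_id y).div_const 3).const_sub 1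
      simpa using this
    have h3 : HasDerivAt (fun x : ℝ => Real.exp x - 1 - x) (Real.exp y - 1) y := by
      have := ((Real.hasDerivAt_exp y).sub_const 1).sub (hasDerivAt_id y)
      exact this
    have := (hasDerivAt_id y).sub ((h1.mul h2).sub (h3.div_const 3))
    refine this.congr_deriv ?_
    ring
  have hH : ∀ x, 0 ≤ x →
      0 ≤ x - ((Real.exp x - 1) * (1 - x / 3) - (Real.exp x - 1 - x) / 3) := by
    apply nonneg_of_deriv _ _ hderH (by simp)
    intro y hy
    have := g_nonneg y hy
    linarith
  have hF := nonneg_of_deriv _ _ hderF (by simp) hH u hu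
  linarith

private lemma chord (s b x : ℝ) (hb : 0 < b) (hx0 : 0 ≤ x) (hxb : x ≤ b) :
    Real.exp (s * x) ≤ 1 + x / b * (Real.exp (s * b) - 1) := by
  have ha : (0:ℝ) ≤ 1 - x / b := by
    have : x / b ≤ 1 := (div_le_one hb).2 hxb
    linarith
  have hb' : (0:ℝ) ≤ x / b := by positivity
  have h := convexOn_exp.2 (Set.mem_univ (0:ℝ)) (Set.mem_univ (s * b)) ha hb' (by ring)
  simp only [smul_eq_mul, mul_zero, zero_add, Real.exp_zero, mul_one] at h
  have hx : x / b * (s * b) = s * x := by field_simp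
  rw [hx] at h
  linarith

private lemma count_upper {n m : ℕ} (x : Fin n → ℝ) (a s : ℝ) (hs : 0 ≤ s)
    [DecidablePred (fun ω : Fin m → Fin n => a ≤ ∑ i : Fin m, x (ω i))] :
    ((Finset.filter (fun ω : Fin m → Fin n => a ≤ ∑ i : Fin m, x (ω i)) univ).card : ℝ)
      ≤ Real.exp (-(s * a)) * (∑ j, Real.exp (s * x j)) ^ m := by
  set F := Finset.filter (fun ω : Fin m → Fin n => a ≤ ∑ i : Fin m, x (ω i)) univ with hF
  have step1 : (F.card : ℝ)
      ≤ ∑ ω : Fin m → Fin n, Real.exp (s * (∑ i, x (ω i)) - s * a) := by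
    rw [Finset.card_eq_sum_ones, Nat.cast_sum]
    calc (∑ _ω ∈ F, ((1:ℕ):ℝ))
        ≤ ∑ ω ∈ F, Real.exp (s * (∑ i, x (ω i)) - s * a) := by
          apply Finset.sum_le_sum
          intro ω hω
          rw [hF, Finset.mem_filter] at hω
          have h1 : (0:ℝ) ≤ s * (∑ i, x (ω i)) - s * a := by
            have := mul_le_mul_of_nonneg_left hω.2 hs
            linarith
          simpa using Real.one_le_exp h1
      _ ≤ ∑ ω : Fin m → Fin n, Real.exp (s * (∑ i, x (ω i)) - s * a) :=
          Finset.sum_le_sum_of_subset_of_nonneg (Finset.subset_univ F)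
            (fun ω _ _ => (Real.exp_pos _).le)
  have step2 : ∑ ω : Fin m → Fin n, Real.exp (s * (∑ i, x (ω i)) - s * a)
      = Real.exp (-(s * a)) * (∑ j, Real.exp (s * x j)) ^ m := by
    have hpow : (∑ j, Real.exp (s * x j)) ^ m
        = ∑ ω : Fin m → Fin n, ∏ i : Fin m, Real.exp (s * x (ω i)) := by
      have h := Finset.prod_univ_sum (fun _ : Fin m => (univ : Finset (Fin n)))
        (fun _ j => Real.exp (s * x j))
      simpa [Finset.prod_const, Fintype.piFinset_univ] using h
    rw [hpow, Finset.mul_sum]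
    apply Finset.sum_congr rfl
    intro ω _
    rw [← Real.exp_sum, ← Real.exp_add]
    congr 1
    rw [Finset.mul_sum]
    ring
  linarith [step1, step2.le, step2.ge]

private lemma count_lower {n m : ℕ} (x : Fin n → ℝ) (a s : ℝ) (hs : 0 ≤ s)
    [DecidablePred (fun ω : Fin m → Fin n => ∑ i : Fin m, x (ω i) ≤ a)] :
    ((Finset.filter (fun ω : Fin m → Fin n => ∑ i : Fin m, x (ω i) ≤ a) univ).card : ℝ)
      ≤ Real.exp (s * a) * (∑ j, Real.exp (-s * x j)) ^ m := by
  classical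
  have h := count_upper (m := m) (fun j => -x j) (-a) s hs
  have hcong : Finset.filter (fun ω : Fin m → Fin n => -a ≤ ∑ i : Fin m, (fun j => -x j) (ω i)) univ
      = Finset.filter (fun ω : Fin m → Fin n => ∑ i : Fin m, x (ω i) ≤ a) univ := by
    apply Finset.filter_congr
    intro ω _
    simp
  rw [hcong] at h
  refine h.trans_eq ?_
  congr 1
  · congr 1; ring
  · congr 1
    apply Finset.sum_congr rfl
    intro j _
    congr 1
    ring

private lemma mgf_sum_le {n : ℕ} [NeZero n] (x : Fin n → ℝ) (b s : ℝ) (hb : 0 < b)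
    (hx : ∀ j, 0 ≤ x j ∧ x j ≤ b) :
    ∑ j, Real.exp (s * x j)
      ≤ (n : ℝ) * Real.exp ((∑ j, x j) / (n * b) * (Real.exp (s * b) - 1)) := by
  have hn : (0:ℝ) < n := Nat.cast_pos.2 (Nat.pos_of_ne_zero (NeZero.ne n))
  calc ∑ j, Real.exp (s * x j)
      ≤ ∑ j, (1 + x j / b * (Real.exp (s * b) - 1)) :=
        Finset.sum_le_sum fun j _ => chord s b (x j) hb (hx j).1 (hx j).2
    _ = (n : ℝ) * (1 + (∑ j, x j) / (n * b) * (Real.exp (s * b) - 1)) := by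
        rw [Finset.sum_add_distrib, Finset.sum_const, Finset.card_univ, Fintype.card_fin,
          nsmul_eq_mul, mul_one, ← Finset.sum_mul, ← Finset.sum_div]
        field_simp
    _ ≤ (n : ℝ) * Real.exp ((∑ j, x j) / (n * b) * (Real.exp (s * b) - 1)) := by
        apply mul_le_mul_of_nonneg_left _ hn.le
        linarith [Real.add_one_le_exp ((∑ j, x j) / (n * b) * (Real.exp (s * b) - 1))]

private lemma combine_aux {n m : ℕ} [NeZero n] (c e1 e2 L : ℝ)
    (h1 : c ≤ Real.exp e1 * ((n:ℝ) * Real.exp e2) ^ m)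
    (hexp : e1 + m * e2 ≤ -L) :
    c * ((n:ℝ)⁻¹) ^ m ≤ Real.exp (-L) := by
  have hn : (0:ℝ) < n := Nat.cast_pos.2 (Nat.pos_of_ne_zero (NeZero.ne n))
  have key : Real.exp e1 * ((n:ℝ) * Real.exp e2) ^ m * ((n:ℝ)⁻¹) ^ m
      = Real.exp (e1 + m * e2) := by
    rw [mul_pow, ← Real.exp_nat_mul, Real.exp_add]
    field_simp
    rw [← mul_pow, mul_one_div_cancel hn.ne', one_pow]
  calc c * ((n:ℝ)⁻¹) ^ m
      ≤ Real.exp e1 * ((n:ℝ) * Real.exp e2) ^ m * ((n:ℝ)⁻¹) ^ m :=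
        mul_le_mul_of_nonneg_right h1 (by positivity)
    _ = Real.exp (e1 + m * e2) := key
    _ ≤ Real.exp (-L) := Real.exp_le_exp.2 hexp

private lemma tail_upper {n m : ℕ} [NeZero n] (x : Fin n → ℝ) (b s a L : ℝ)
    (hb : 0 < b) (hs : 0 ≤ s) (hx : ∀ j, 0 ≤ x j ∧ x j ≤ b)
    [DecidablePred (fun ω : Fin m → Fin n => a ≤ ∑ i : Fin m, x (ω i))]
    (hexp : -(s * a) + m * ((∑ j, x j) / (n * b) * (Real.exp (s * b) - 1)) ≤ -L) :
    ((Finset.filter (fun ω : Fin m → Fin n => a ≤ ∑ i : Fin m, x (ω i)) univ).card : ℝ)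
      * ((n:ℝ)⁻¹) ^ m ≤ Real.exp (-L) := by
  refine combine_aux _ _ _ _ ?_ hexp
  refine (count_upper x a s hs).trans ?_
  apply mul_le_mul_of_nonneg_left _ (Real.exp_pos _).le
  exact pow_le_pow_left₀ (Finset.sum_nonneg fun j _ => (Real.exp_pos _).le)
    (mgf_sum_le x b s hb hx) m

private lemma tail_lower {n m : ℕ} [NeZero n] (x : Fin n → ℝ) (b s a L : ℝ)
    (hb : 0 < b) (hs : 0 ≤ s) (hx : ∀ j, 0 ≤ x j ∧ x j ≤ b)
    [DecidablePred (fun ω : Fin m → Fin n => ∑ i : Fin m, x (ω i) ≤ a)]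
    (hexp : s * a + m * ((∑ j, x j) / (n * b) * (Real.exp (-s * b) - 1)) ≤ -L) :
    ((Finset.filter (fun ω : Fin m → Fin n => ∑ i : Fin m, x (ω i) ≤ a) univ).card : ℝ)
      * ((n:ℝ)⁻¹) ^ m ≤ Real.exp (-L) := by
  refine combine_aux _ _ _ _ ?_ hexp
  refine (count_lower x a s hs).trans ?_
  apply mul_le_mul_of_nonneg_left _ (Real.exp_pos _).le
  exact pow_le_pow_left₀ (Finset.sum_nonneg fun j _ => (Real.exp_pos _).le)
    (mgf_sum_le x b (-s) hb hx) m

private lemma upper_key (V b L t : ℝ) (hV : 0 < V) (hb : 0 < b) (hL : 0 ≤ L)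
    (ht : t = Real.sqrt (2 * V * L) + 2 * b / 3 * L) :
    ∃ s, 0 ≤ s ∧ V / b ^ 2 * (Real.exp (s * b) - 1 - s * b) - s * t ≤ -L := by
  set S := Real.sqrt (2 * V * L) with hS
  clear_value S
  have hsq : S ^ 2 = 2 * V * L := by rw [hS]; exact Real.sq_sqrt (by positivity)
  have hSnn : 0 ≤ S := hS ▸ Real.sqrt_nonneg _
  have ht0 : 0 ≤ t := by rw [ht]; positivity
  set D := V + b * t / 3 with hD
  clear_value D
  have hD0 : 0 < D := by rw [hD]; nlinarith [mul_nonneg hb.le ht0]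
  refine ⟨t / D, div_nonneg ht0 hD0.le, ?_⟩
  set s := t / D with hs
  clear_value s
  have hsD : s * D = t := by rw [hs]; exact div_mul_cancel₀ t hD0.ne'
  have hs0 : 0 ≤ s := hs ▸ div_nonneg ht0 hD0.le
  have hsb : 0 ≤ s * b := mul_nonneg hs0 hb.le
  have h1mu : 1 - s * b / 3 = V / D := by
    rw [hs]; field_simp; linear_combination 3 * hD
  have hphi := phi_ineq (s * b) hsb
  rw [h1mu] at hphi
  have hP : 0 ≤ Real.exp (s * b) - 1 - s * b := by
    linarith [Real.add_one_le_exp (s * b)]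
  have h3 : (Real.exp (s * b) - 1 - s * b) * V ≤ (s * b) ^ 2 / 2 * D := by
    have := mul_le_mul_of_nonneg_right hphi hD0.le
    calc (Real.exp (s * b) - 1 - s * b) * V
        = (Real.exp (s * b) - 1 - s * b) * (V / D) * D := by field_simp
      _ ≤ (s * b) ^ 2 / 2 * D := this
  have h4 : (s * b) ^ 2 / 2 * D = b ^ 2 * (s * t) / 2 := by
    rw [← hsD]; ring
  have h2LD : 2 * L * D ≤ t ^ 2 := by
    have key : t ^ 2 - 2 * L * D = 2 * b / 3 * L * S := by
      rw [ht, hD, ht]; linear_combination hsq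
    linarith [key, mul_nonneg (mul_nonneg (by linarith : (0:ℝ) ≤ 2 * b / 3) hL) hSnn]
  have hLst : 2 * L ≤ s * t := by
    have : 2 * L * D ≤ (s * t) * D := by
      calc 2 * L * D ≤ t ^ 2 := h2LD
        _ = (s * t) * D := by rw [← hsD]; ring
    exact le_of_mul_le_mul_right this hD0
  have hfin : V / b ^ 2 * (Real.exp (s * b) - 1 - s * b) ≤ s * t / 2 := by
    rw [div_mul_eq_mul_div, div_le_div_iff₀ (by positivity) (by norm_num : (0:ℝ) < 2)]
    nlinarith [h3, h4]
  linarith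

private lemma lower_key (V b L t : ℝ) (hV : 0 < V) (hb : 0 < b) (hL : 0 ≤ L)
    (ht : t = Real.sqrt (2 * V * L) + 2 * b / 3 * L) :
    ∃ s, 0 ≤ s ∧ V / b ^ 2 * (Real.exp (-(s * b)) - 1 + s * b) - s * t ≤ -L := by
  set S := Real.sqrt (2 * V * L) with hS
  clear_value S
  have hsq : S ^ 2 = 2 * V * L := by rw [hS]; exact Real.sq_sqrt (by positivity)
  have hSnn : 0 ≤ S := hS ▸ Real.sqrt_nonneg _
  have ht0 : 0 ≤ t := by rw [ht]; positivity
  refine ⟨t / V, div_nonneg ht0 hV.le, ?_⟩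
  set s := t / V with hs
  clear_value s
  have hsV : s * V = t := by rw [hs]; exact div_mul_cancel₀ t hV.ne'
  have hs0 : 0 ≤ s := hs ▸ div_nonneg ht0 hV.le
  have hsb : 0 ≤ s * b := mul_nonneg hs0 hb.le
  have hq := exp_neg_quad (s * b) hsb
  have h2VL : 2 * V * L ≤ t ^ 2 := by
    nlinarith [mul_nonneg (mul_nonneg (by linarith : (0:ℝ) ≤ 2 * b / 3) hL) hSnn,
      sq_nonneg (2 * b / 3 * L)]
  have h5 : V / b ^ 2 * (Real.exp (-(s * b)) - 1 + s * b) ≤ V * s ^ 2 / 2 := by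
    have h6 : Real.exp (-(s * b)) - 1 + s * b ≤ (s * b) ^ 2 / 2 := by linarith
    calc V / b ^ 2 * (Real.exp (-(s * b)) - 1 + s * b)
        ≤ V / b ^ 2 * ((s * b) ^ 2 / 2) :=
          mul_le_mul_of_nonneg_left h6 (by positivity)
      _ = V * s ^ 2 / 2 := by field_simp
  have h7 : V * s ^ 2 / 2 = s * t / 2 := by rw [← hsV]; ring
  have h8 : 2 * L ≤ s * t := by
    have : 2 * L * V ≤ (s * t) * V := by
      calc 2 * L * V ≤ t ^ 2 := by linarith
        _ = (s * t) * V := by rw [← hsV]; ring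
    exact le_of_mul_le_mul_right this hV
  linarith

private lemma P_singleton {n m : ℕ} [NeZero n] (ω : Fin m → Fin n) :
    (Measure.pi fun _ : Fin m => (PMF.uniformOfFintype (Fin n)).toMeasure) {ω}
      = ((n : ℝ≥0∞)⁻¹) ^ m := by
  rw [show ({ω} : Set (Fin m → Fin n)) = Set.pi Set.univ (fun i => {ω i}) by
    rw [Set.univ_pi_singleton]]
  rw [Measure.pi_pi]
  simp [PMF.toMeasure_apply_singleton _ _ (measurableSet_singleton _),
    PMF.uniformOfFintype_apply]

private lemma P_finset {n m : ℕ} [NeZero n] (F : Finset (Fin m → Fin n)) :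
    (Measure.pi fun _ : Fin m => (PMF.uniformOfFintype (Fin n)).toMeasure) ↑F
      = (F.card : ℝ≥0∞) * ((n : ℝ≥0∞)⁻¹) ^ m := by
  have h1 : (↑F : Set (Fin m → Fin n)) = ⋃ ω ∈ F, ({ω} : Set (Fin m → Fin n)) := by
    ext ω; simp
  rw [h1, measure_biUnion_finset ?_ (fun ω _ => (Set.toFinite _).measurableSet)]
  · rw [Finset.sum_congr rfl (fun ω _ => P_singleton ω), Finset.sum_const, nsmul_eq_mul]
  · intro a _ b _ hab
    simp [Set.disjoint_singleton, hab]

private lemma card_bound_to_measure {n m : ℕ} [NeZero n] (F : Finset (Fin m → Fin n)) {δ : ℝ}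
    (h : (F.card : ℝ) * ((n:ℝ)⁻¹) ^ m ≤ δ) :
    (F.card : ℝ≥0∞) * ((n:ℝ≥0∞)⁻¹) ^ m ≤ ENNReal.ofReal δ := by
  have hn : (0:ℝ) < n := Nat.cast_pos.2 (Nat.pos_of_ne_zero (NeZero.ne n))
  have key : (F.card : ℝ≥0∞) * ((n:ℝ≥0∞)⁻¹) ^ m
      = ENNReal.ofReal ((F.card : ℝ) * ((n:ℝ)⁻¹) ^ m) := by
    rw [ENNReal.ofReal_mul (by positivity), ENNReal.ofReal_pow (by positivity),
      ENNReal.ofReal_inv_of_pos hn, ENNReal.ofReal_natCast, ENNReal.ofReal_natCast]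
  rw [key]
  exact ENNReal.ofReal_le_ofReal h
/-- for `Ω = (Ω(1),…,Ω(m))` i.i.d. uniform on `[n]`, with probability
at least `1 - 2δ`,
`(1-α)(m/n)‖v‖² ≤ ‖v_Ω‖² ≤ (1+α)(m/n)‖v‖²`, where
`α = √(2 μ(v) log(1/δ)/m) + (2 μ(v)/(3m)) log(1/δ)`. -/
theorem subsampled_norm_concentration {n m : ℕ} [NeZero n]
    (v : EuclideanSpace ℝ (Fin n)) (hv : v ≠ 0)
    {δ : ℝ} (hδ0 : 0 < δ) (hδ1 : δ < 1) (α : ℝ)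
    (hα : α = Real.sqrt (2 * muVec v * Real.log (1 / δ) / m) +
      (2 * muVec v / (3 * m)) * Real.log (1 / δ)) :
    1 - ENNReal.ofReal (2 * δ) ≤
      (Measure.pi fun _ : Fin m => (PMF.uniformOfFintype (Fin n)).toMeasure)
        {ω : Fin m → Fin n |
          (1 - α) * (m / n) * ‖v‖ ^ 2 ≤ ∑ i : Fin m, (v (ω i)) ^ 2 ∧
          ∑ i : Fin m, (v (ω i)) ^ 2 ≤ (1 + α) * (m / n) * ‖v‖ ^ 2} := by
  classical
  set P := Measure.pi fun _ : Fin m => (PMF.uniformOfFintype (Fin n)).toMeasure with hPdef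
  haveI : IsProbabilityMeasure P := by rw [hPdef]; infer_instance
  rcases Nat.eq_zero_or_pos m with hm | hm
  · subst hm
    have hset : {ω : Fin 0 → Fin n |
        (1 - α) * ((0:ℕ) / n) * ‖v‖ ^ 2 ≤ ∑ i : Fin 0, (v (ω i)) ^ 2 ∧
        ∑ i : Fin 0, (v (ω i)) ^ 2 ≤ (1 + α) * ((0:ℕ) / n) * ‖v‖ ^ 2} = Set.univ := by
      ext ω
      simp
    rw [hset, measure_univ]
    exact tsub_le_self
  -- main case
  have hn : (0:ℝ) < n := Nat.cast_pos.2 (Nat.pos_of_ne_zero (NeZero.ne n))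
  have hmR : (0:ℝ) < m := Nat.cast_pos.2 hm
  -- basic quantities
  obtain ⟨j0, hj0⟩ : ∃ j, v j ≠ 0 := by
    by_contra h
    push_neg at h
    exact hv (by ext j; exact h j)
  set B := ⨆ j : Fin n, |v j| with hB
  have hBle : ∀ j, |v j| ≤ B := by
    intro j
    rw [hB]
    exact le_ciSup (Set.Finite.bddAbove (Set.finite_range fun j : Fin n => |v j|)) j
  have hBpos : 0 < B := lt_of_lt_of_le (abs_pos.2 hj0) (hBle j0)
  set b := B ^ 2 with hb_def
  have hb : 0 < b := pow_pos hBpos 2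
  have hxb : ∀ j, 0 ≤ (v j) ^ 2 ∧ (v j) ^ 2 ≤ b := by
    intro j
    refine ⟨sq_nonneg _, ?_⟩
    rw [hb_def, ← sq_abs]
    exact pow_le_pow_left₀ (abs_nonneg _) (hBle j) 2
  set T := ∑ j, (v j) ^ 2 with hT_def
  have hT : 0 < T := by
    apply Finset.sum_pos' (fun j _ => sq_nonneg _)
    exact ⟨j0, Finset.mem_univ j0, by positivity⟩
  have hnorm : ‖v‖ ^ 2 = T := by
    rw [EuclideanSpace.norm_eq, Real.sq_sqrt (Finset.sum_nonneg fun i _ => by positivity)]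
    apply Finset.sum_congr rfl
    intro j _
    rw [Real.norm_eq_abs, sq_abs]
  have hμ : muVec v = n * b / T := by
    rw [muVec, Fintype.card_fin, hnorm, ← hB, ← hb_def]
  have hμ0 : 0 ≤ muVec v := by rw [hμ]; positivity
  set L := Real.log (1 / δ) with hL_def
  have hL : 0 ≤ L := Real.log_nonneg (one_le_one_div hδ0 hδ1.le)
  have hexpL : Real.exp (-L) = δ := by
    rw [hL_def, one_div, Real.log_inv, neg_neg, Real.exp_log hδ0]
  set V := m * b * T / n with hV_def
  have hV : 0 < V := by rw [hV_def]; positivity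
  set t := Real.sqrt (2 * V * L) + 2 * b / 3 * L with ht_def
  set E := (m : ℝ) / n * T with hE_def
  have hE0 : 0 ≤ E := by rw [hE_def]; positivity
  -- α * E = t
  have hαE : α * E = t := by
    rw [hα, ht_def, hE_def, add_mul]
    congr 1
    · have h1 : Real.sqrt (2 * muVec v * L / m) * ((m:ℝ) / n * T)
          = Real.sqrt (2 * muVec v * L / m * ((m:ℝ) / n * T) ^ 2) := by
        rw [Real.sqrt_mul (by positivity), Real.sqrt_sq (by positivity)]
      rw [h1]
      congr 1
      rw [hμ, hV_def]
      field_simp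
    · rw [hμ]
      field_simp
  -- event bounds
  have hup : (1 + α) * ((m:ℝ) / n) * ‖v‖ ^ 2 = E + t := by
    rw [hnorm, ← hαE, hE_def]; ring
  have hlow : (1 - α) * ((m:ℝ) / n) * ‖v‖ ^ 2 = E - t := by
    rw [hnorm, ← hαE, hE_def]; ring
  -- tail finsets
  set UF := Finset.filter (fun ω : Fin m → Fin n => E + t ≤ ∑ i : Fin m, (v (ω i)) ^ 2) univ
    with hUF
  set LF := Finset.filter (fun ω : Fin m → Fin n => ∑ i : Fin m, (v (ω i)) ^ 2 ≤ E - t) univ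
    with hLF
  -- upper tail bound
  have hUbound : (UF.card : ℝ) * ((n:ℝ)⁻¹) ^ m ≤ δ := by
    obtain ⟨s, hs0, hskey⟩ := upper_key V b L t hV hb hL ht_def
    rw [← hexpL]
    apply tail_upper (fun j => (v j) ^ 2) b s (E + t) L hb hs0 hxb
    refine le_trans (le_of_eq ?_) hskey
    rw [hV_def, hE_def, ← hT_def]
    field_simp
    ring
  have hLbound : (LF.card : ℝ) * ((n:ℝ)⁻¹) ^ m ≤ δ := by
    obtain ⟨s, hs0, hskey⟩ := lower_key V b L t hV hb hL ht_def
    rw [← hexpL]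
    apply tail_lower (fun j => (v j) ^ 2) b s (E - t) L hb hs0 hxb
    refine le_trans (le_of_eq ?_) hskey
    rw [hV_def, hE_def, ← hT_def, neg_mul]
    field_simp
    ring
  -- measure of complement
  set Good := {ω : Fin m → Fin n |
      (1 - α) * ((m:ℕ) / (n:ℕ) : ℝ) * ‖v‖ ^ 2 ≤ ∑ i : Fin m, (v (ω i)) ^ 2 ∧
      ∑ i : Fin m, (v (ω i)) ^ 2 ≤ (1 + α) * ((m:ℕ) / (n:ℕ) : ℝ) * ‖v‖ ^ 2} with hGood
  have hGoodMeas : MeasurableSet Good := (Set.toFinite _).measurableSet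
  have hsub : Goodᶜ ⊆ (↑LF : Set (Fin m → Fin n)) ∪ ↑UF := by
    intro ω hω
    rw [Set.mem_compl_iff, hGood, Set.mem_setOf_eq, not_and_or] at hω
    rcases hω with h | h
    · left
      push_neg at h
      rw [hlow] at h
      simp only [Finset.coe_filter, Set.mem_setOf_eq, hLF, Finset.mem_filter]
      exact ⟨Finset.mem_univ ω, h.le⟩
    · right
      push_neg at h
      rw [hup] at h
      simp only [Finset.coe_filter, Set.mem_setOf_eq, hUF, Finset.mem_filter]
      exact ⟨Finset.mem_univ ω, h.le⟩
  have hcompl : P Goodᶜ ≤ ENNReal.ofReal (2 * δ) := by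
    calc P Goodᶜ ≤ P ((↑LF : Set (Fin m → Fin n)) ∪ ↑UF) := measure_mono hsub
      _ ≤ P ↑LF + P ↑UF := measure_union_le _ _
      _ ≤ ENNReal.ofReal δ + ENNReal.ofReal δ := by
          rw [hPdef, P_finset, P_finset]
          exact add_le_add (card_bound_to_measure LF hLbound)
            (card_bound_to_measure UF hUbound)
      _ = ENNReal.ofReal (2 * δ) := by
          rw [← ENNReal.ofReal_add hδ0.le hδ0.le]
          congr 1
          ring
  calc 1 - ENNReal.ofReal (2 * δ) ≤ 1 - P Goodᶜ := tsub_le_tsub_left hcompl 1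
    _ = P Good := by
        rw [measure_compl hGoodMeas (measure_ne_top _ _), measure_univ,
          ENNReal.sub_sub_cancel ENNReal.one_ne_top prob_le_one]
end

section
/- Consider a family of n₁×n₂ rank-r block matrices M = ∑_{k=1}^r u_k v_k^T with u_k supported on block R_k of size n₁/r (entries in [1,√μ₀]) and v_k = 1_{C_k} the indicator of block C_k of size n₂/(μ₀r). Then the column space U of any such M satisfies μ(U) ≤ μ₀. -/
open scoped RealInnerProductSpace


/-- for the block family of rank-`r` matrices `∑_k u_k v_kᵀ` where
`u_k ∈ ℝ^{n₁}` (with `n₁ = r l₁`) is supported on the block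
`R_k = {j : j/l₁ = k}` with entries in `[1, √μ₀]` there, the column space
`U = span(u₁,…,u_r)` has coherence `μ(U) ≤ μ₀`. -/
theorem block_matrix_coherence {r l₁ : ℕ} (hr : 0 < r) (hl : 0 < l₁) (μ₀ : ℝ)
    (u : Fin r → EuclideanSpace ℝ (Fin (r * l₁)))
    (hblock : ∀ (k : Fin r) (j : Fin (r * l₁)), (j : ℕ) / l₁ = (k : ℕ) →
      1 ≤ u k j ∧ u k j ≤ Real.sqrt μ₀)
    (hoff : ∀ (k : Fin r) (j : Fin (r * l₁)), (j : ℕ) / l₁ ≠ (k : ℕ) → u k j = 0) :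
    coh (Submodule.span ℝ (Set.range u)) ≤ μ₀ := by
  classical
  have hrl : 0 < r * l₁ := Nat.mul_pos hr hl
  haveI : Nonempty (Fin (r * l₁)) := ⟨⟨0, hrl⟩⟩
  set U := Submodule.span ℝ (Set.range u) with hU
  -- basic positivity of μ₀
  have h1s : (1 : ℝ) ≤ Real.sqrt μ₀ := by
    have h := hblock ⟨0, hr⟩ ⟨0, hrl⟩ (by simp)
    linarith [h.1, h.2]
  have hμpos : 0 < μ₀ := Real.sqrt_pos.mp (lt_of_lt_of_le one_pos h1s)
  have hsq : Real.sqrt μ₀ ^ 2 = μ₀ := Real.sq_sqrt hμpos.le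
  -- orthogonality of the u k
  have horth : ∀ k k' : Fin r, k ≠ k' → ⟪u k, u k'⟫ = 0 := by
    intro k k' hkk'
    simp only [PiLp.inner_apply, RCLike.inner_apply, starRingEnd_apply, star_trivial]
    apply Finset.sum_eq_zero
    intro j _
    by_cases h : (j : ℕ) / l₁ = (k : ℕ)
    · rw [hoff k' j (by rw [h]; exact fun e => hkk' (Fin.ext e)), zero_mul]
    · rw [hoff k j h, mul_zero]
  -- inner product formula
  have hinner : ∀ k : Fin r, ⟪u k, u k⟫ = ∑ j, u k j * u k j := by
    intro k
    simp only [PiLp.inner_apply, RCLike.inner_apply, starRingEnd_apply, star_trivial]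
  -- each u k is nonzero
  have hmem : ∀ k : Fin r, ((k : ℕ) * l₁) < r * l₁ :=
    fun k => (Nat.mul_lt_mul_right hl).mpr k.isLt
  have hz : ∀ k : Fin r, u k ≠ 0 := by
    intro k h
    have h1 := (hblock k ⟨(k : ℕ) * l₁, hmem k⟩ (by simp [Nat.mul_div_cancel _ hl])).1
    rw [h] at h1
    simp at h1
    linarith
  -- linear independence, hence rank
  have hli : LinearIndependent ℝ u :=
    linearIndependent_of_ne_zero_of_inner_eq_zero hz horth
  have hrank : Module.finrank ℝ U = r := by
    rw [hU, finrank_span_eq_card hli, Fintype.card_fin]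
  -- norm lower bound
  have hnormge : ∀ k : Fin r, (l₁ : ℝ) ≤ ⟪u k, u k⟫ := by
    intro k
    have hf : ∀ i : Fin l₁, (k : ℕ) * l₁ + (i : ℕ) < r * l₁ := by
      intro i
      have h1 : (k : ℕ) * l₁ + (i : ℕ) < ((k : ℕ) + 1) * l₁ := by
        rw [add_mul, one_mul]; omega
      exact lt_of_lt_of_le h1 (Nat.mul_le_mul_right _ k.isLt)
    set f : Fin l₁ → Fin (r * l₁) := fun i => ⟨(k : ℕ) * l₁ + (i : ℕ), hf i⟩ with hfdef
    have hfinj : Function.Injective f := by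
      intro a b hab
      have h := congrArg Fin.val hab
      simp only [hfdef] at h
      exact Fin.ext (by omega)
    have hfdiv : ∀ i : Fin l₁, ((f i : ℕ)) / l₁ = (k : ℕ) := by
      intro i
      simp only [hfdef]
      rw [mul_comm, Nat.mul_add_div hl, Nat.div_eq_of_lt i.isLt, add_zero]
    have h1 : (l₁ : ℝ) = ∑ _i : Fin l₁, (1 : ℝ) := by simp
    have h2 : ∀ i : Fin l₁, (1 : ℝ) ≤ u k (f i) * u k (f i) := by
      intro i
      have := (hblock k (f i) (hfdiv i)).1
      nlinarith
    have h3 : ∑ _i : Fin l₁, (1 : ℝ) ≤ ∑ i : Fin l₁, u k (f i) * u k (f i) :=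
      Finset.sum_le_sum fun i _ => h2 i
    have h4 : ∑ i : Fin l₁, u k (f i) * u k (f i)
        = ∑ j ∈ Finset.univ.image f, u k j * u k j := by
      rw [Finset.sum_image (fun a _ b _ h => hfinj h)]
    have h5 : ∑ j ∈ Finset.univ.image f, u k j * u k j ≤ ∑ j, u k j * u k j :=
      Finset.sum_le_sum_of_subset_of_nonneg (Finset.subset_univ _)
        (fun j _ _ => mul_self_nonneg _)
    rw [hinner k]
    linarith
  -- bound on each projection
  have hproj : ∀ j : Fin (r * l₁),
      ‖(U.orthogonalProjectionOnto (EuclideanSpace.single j 1) : EuclideanSpace ℝ (Fin (r * l₁)))‖ ^ 2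
        ≤ μ₀ / l₁ := by
    intro j
    have hjk : (j : ℕ) / l₁ < r := Nat.div_lt_of_lt_mul (by rw [Nat.mul_comm l₁ r]; exact j.isLt)
    set k0 : Fin r := ⟨(j : ℕ) / l₁, hjk⟩ with hk0
    have hNpos : 0 < ⟪u k0, u k0⟫ :=
      lt_of_lt_of_le (by exact_mod_cast hl) (hnormge k0)
    set c : ℝ := u k0 j / ⟪u k0, u k0⟫ with hc
    have hvproj : (U.orthogonalProjectionOnto (EuclideanSpace.single j 1)
        : EuclideanSpace ℝ (Fin (r * l₁))) = c • u k0 := by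
      rw [← Submodule.starProjection_apply]
      apply Submodule.eq_starProjection_of_mem_of_inner_eq_zero
      · exact Submodule.smul_mem _ _ (Submodule.subset_span (Set.mem_range_self k0))
      · intro y hy
        induction hy using Submodule.span_induction with
        | mem x hx =>
          obtain ⟨k, rfl⟩ := hx
          rw [inner_sub_left, real_inner_smul_left]
          have hsing : ⟪(EuclideanSpace.single j (1:ℝ) : EuclideanSpace ℝ (Fin (r * l₁))),
              u k⟫ = u k j := by
            rw [EuclideanSpace.inner_single_left]; simp
          by_cases hk : k = k0
          · subst hk
            rw [hsing, hc, div_mul_cancel₀ _ hNpos.ne', sub_self]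
          · rw [hsing, hoff k j (fun e => hk (Fin.ext (by rw [← e, hk0]))),
              horth k0 k (fun e => hk e.symm), mul_zero, sub_zero]
        | zero => simp
        | add x y _ _ hx hy => rw [inner_add_right, hx, hy, add_zero]
        | smul a x _ hx => rw [real_inner_smul_right, hx, mul_zero]
    rw [hvproj]
    have hnorm : ‖c • u k0‖ ^ 2 = c ^ 2 * ⟪u k0, u k0⟫ := by
      rw [norm_smul, mul_pow, real_inner_self_eq_norm_sq]
      simp [sq_abs]
    rw [hnorm, hc]
    have hb := hblock k0 j rfl
    have hnum : u k0 j ^ 2 ≤ μ₀ := by nlinarith [hb.1, hb.2]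
    have hnum0 : 0 ≤ u k0 j ^ 2 := sq_nonneg _
    have key : (u k0 j / ⟪u k0, u k0⟫) ^ 2 * ⟪u k0, u k0⟫
        = u k0 j ^ 2 / ⟪u k0, u k0⟫ := by
      rw [div_pow, sq (⟪u k0, u k0⟫ : ℝ), ← div_div, div_mul_cancel₀ _ hNpos.ne']
    rw [key]
    exact div_le_div₀ hμpos.le hnum (by exact_mod_cast hl) (hnormge k0)
  -- conclude
  have hsup : (⨆ j : Fin (r * l₁),
      ‖(U.orthogonalProjectionOnto (EuclideanSpace.single j 1)
        : EuclideanSpace ℝ (Fin (r * l₁)))‖ ^ 2) ≤ μ₀ / l₁ :=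
    ciSup_le hproj
  rw [coh, hrank, Fintype.card_fin]
  have hcoef : ((r * l₁ : ℕ) : ℝ) / (r : ℝ) = (l₁ : ℝ) := by
    push_cast
    field_simp
  rw [hcoef]
  calc (l₁ : ℝ) * _ ≤ (l₁ : ℝ) * (μ₀ / l₁) :=
        mul_le_mul_of_nonneg_left hsup (by positivity)
    _ = μ₀ := by field_simp
end

section
/- Suppose each entry of an n₁×n₂ matrix is observed independently with probability p, and consider the family of block matrices above, where unique recovery requires at least one observed entry in each of the n₁ rows of the diagonal blocks (each row of a block having n₂/(μ₀r) entries). If the per-row miss probability π₁ = (1−p)^{n₂/(μ₀r)} satisfies (1−π₁)^{n₁} ≥ 1−δ with δ < 1/2, then log(1−p) ≤ (μ₀ r/n₂) log(2δ/n₁). -/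
/-- passive lower bound computation: each entry of an `n₁ × n₂`
matrix is observed independently with probability `p`; each row of a diagonal
block has `l₂ = n₂/(μ₀ r)` entries, so the per-row miss probability is
`π₁ = (1-p)^{l₂}`. If all `n₁` rows are hit with probability at least `1-δ`
(`δ < 1/2`), i.e. `(1-π₁)^{n₁} ≥ 1-δ`, then
`log(1-p) ≤ (μ₀ r/n₂) log(2δ/n₁)`. -/
theorem passive_lower_bound_condition {n₁ n₂ r μ₀ l₂ : ℕ}
    (hn₁ : 0 < n₁) (hr : 0 < r) (hμ₀ : 0 < μ₀) (hl₂ : 0 < l₂)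
    (hfac : n₂ = μ₀ * r * l₂)
    (p δ : ℝ) (hp0 : 0 < p) (hp1 : p < 1) (hδ0 : 0 < δ) (hδ : δ < 1 / 2)
    (hsucc : 1 - δ ≤ (1 - (1 - p) ^ l₂) ^ n₁) :
    Real.log (1 - p) ≤ ((μ₀ : ℝ) * r / n₂) * Real.log (2 * δ / n₁) := by
  set π : ℝ := (1 - p) ^ l₂ with hπdef
  have h1p0 : (0:ℝ) < 1 - p := by linarith
  have h1p1 : 1 - p < 1 := by linarith
  have hπ0 : 0 < π := pow_pos h1p0 _
  have hπ1 : π < 1 := pow_lt_one₀ (le_of_lt h1p0) h1p1 hl₂.ne'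
  have hn₁R : (0:ℝ) < (n₁:ℝ) := by exact_mod_cast hn₁
  -- log(1-δ) ≥ -2δ
  have hlogδ : -(2*δ) ≤ Real.log (1 - δ) := by
    have h1 : (0:ℝ) < 1 - δ := by linarith
    rw [← Real.log_exp (-(2*δ))]
    apply Real.log_le_log (Real.exp_pos _)
    have hexp : 1 + 2*δ ≤ Real.exp (2*δ) := by
      have := Real.add_one_le_exp (2*δ); linarith
    have h2 : Real.exp (-(2*δ)) = (Real.exp (2*δ))⁻¹ := by
      rw [Real.exp_neg]
    rw [h2]
    have h3 : (Real.exp (2*δ))⁻¹ ≤ (1 + 2*δ)⁻¹ :=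
      inv_anti₀ (by linarith) hexp
    have h4 : (1 + 2*δ)⁻¹ ≤ 1 - δ := by
      rw [inv_eq_one_div, div_le_iff₀ (by linarith : (0:ℝ) < 1 + 2*δ)]
      nlinarith
    linarith
  -- n₁ log(1-π) ≥ log(1-δ)
  have hstep : Real.log (1 - δ) ≤ (n₁:ℝ) * Real.log (1 - π) := by
    have := Real.log_le_log (by linarith : (0:ℝ) < 1 - δ) hsucc
    rwa [Real.log_pow] at this
  -- log(1-π) ≤ -π
  have hlogπ : Real.log (1 - π) ≤ -π := by
    have := Real.log_le_sub_one_of_pos (by linarith : (0:ℝ) < 1 - π)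
    linarith
  -- π ≤ 2δ/n₁
  have hπle : π ≤ 2 * δ / n₁ := by
    have h1 : -(2*δ) ≤ (n₁:ℝ) * Real.log (1 - π) := le_trans hlogδ hstep
    have h2 : (n₁:ℝ) * Real.log (1 - π) ≤ (n₁:ℝ) * (-π) :=
      mul_le_mul_of_nonneg_left hlogπ hn₁R.le
    rw [le_div_iff₀ hn₁R]
    nlinarith
  -- log π ≤ log (2δ/n₁)
  have hlog : Real.log π ≤ Real.log (2 * δ / n₁) := Real.log_le_log hπ0 hπle
  rw [hπdef, Real.log_pow] at hlog
  have hl₂R : (0:ℝ) < (l₂:ℝ) := by exact_mod_cast hl₂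
  have hcoef : ((μ₀ : ℝ) * r / n₂) = 1 / l₂ := by
    subst hfac
    push_cast
    field_simp
  rw [hcoef, one_div, inv_mul_eq_div, le_div_iff₀ hl₂R]
  linarith
end

section
/- If X ~ χ²_d (chi-squared with d degrees of freedom), then with probability at least 1 − 2δ: −2√(d log(1/δ)) ≤ X − d ≤ 2√(d log(1/δ)) + 2 log(1/δ). -/
open MeasureTheory ProbabilityTheory
open Real
open scoped NNReal ENNReal

section LaurentMassartAux

section scalar

lemma lm_log_ineq1 {y : ℝ} (h0 : 0 ≤ y) (h1 : y < 1) :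
    -Real.log (1 - y) ≤ y + y ^ 2 / (2 * (1 - y)) := by
  set g : ℝ → ℝ := fun x => x + x ^ 2 / (2 * (1 - x)) + Real.log (1 - x) with hg
  have key : MonotoneOn g (Set.Ico (0:ℝ) 1) := by
    apply monotoneOn_of_hasDerivWithinAt_nonneg (convex_Ico 0 1)
      (f' := fun x => x ^ 2 / (2 * (1 - x) ^ 2))
    · apply ContinuousOn.add
      · apply ContinuousOn.add continuousOn_id
        apply ContinuousOn.div (by fun_prop) (by fun_prop)
        intro x hx
        simp only [Set.mem_Ico] at hx
        nlinarith [hx.1, hx.2]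
      · apply ContinuousOn.log (by fun_prop)
        intro x hx
        simp only [Set.mem_Ico] at hx
        nlinarith [hx.1, hx.2]
    · intro x hx
      rw [interior_Ico] at hx
      obtain ⟨hx0, hx1⟩ := hx
      have h1x : 1 - x ≠ 0 := by nlinarith
      have hd : HasDerivAt g (1 + (2*x*(2*(1-x)) - x^2 * (-2)) / (2*(1-x))^2 + (-1)/(1-x)) x := by
        have d1 : HasDerivAt (fun x : ℝ => 1 - x) (-1) x := by
          simpa using (hasDerivAt_id x).const_sub 1
        have d2 : HasDerivAt (fun x : ℝ => x ^ 2 / (2 * (1 - x)))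
            ((2*x*(2*(1-x)) - x^2 * (2 * (-1))) / (2*(1-x))^2) x := by
          exact (hasDerivAt_pow 2 x |>.congr_deriv (by ring)).div (d1.const_mul 2)
            (by simpa using h1x)
        have d3 : HasDerivAt (fun x : ℝ => Real.log (1 - x)) ((-1)/(1-x)) x := d1.log h1x
        exact ((hasDerivAt_id x).add (d2.congr_deriv (by ring))).add d3
      have : (1 + (2*x*(2*(1-x)) - x^2 * (-2)) / (2*(1-x))^2 + (-1)/(1-x))
          = x ^ 2 / (2 * (1 - x) ^ 2) := by
        field_simp
        ring
      rw [this] at hd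
      exact hd.hasDerivWithinAt
    · intro x hx
      rw [interior_Ico] at hx
      positivity
  have h := key (Set.mem_Ico.2 ⟨le_refl 0, one_pos⟩) (Set.mem_Ico.2 ⟨h0, h1⟩) h0
  simp only [hg] at h
  norm_num at h
  linarith

lemma lm_log_ineq2 {x : ℝ} (hx : 0 ≤ x) : x - x ^ 2 / 2 ≤ Real.log (1 + x) := by
  set g : ℝ → ℝ := fun x => Real.log (1 + x) - x + x ^ 2 / 2 with hg
  have key : MonotoneOn g (Set.Ici (0:ℝ)) := by
    apply monotoneOn_of_hasDerivWithinAt_nonneg (convex_Ici 0)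
      (f' := fun x => x ^ 2 / (1 + x))
    · apply ContinuousOn.add (ContinuousOn.sub ?_ continuousOn_id) (by fun_prop)
      apply ContinuousOn.log (by fun_prop)
      intro x hx
      simp only [Set.mem_Ici] at hx
      nlinarith
    · intro x hx
      rw [interior_Ici] at hx
      have h1x : 1 + x ≠ 0 := by nlinarith [Set.mem_Ioi.1 hx]
      have hx0 : (0:ℝ) < x := hx
      have d1 : HasDerivAt (fun x : ℝ => 1 + x) 1 x := by
        simpa using (hasDerivAt_id x).const_add 1
      have hd : HasDerivAt g (1/(1+x) - 1 + (2*x)/2) x := by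
        refine ((d1.log h1x).sub (hasDerivAt_id x)).add ?_
        exact (hasDerivAt_pow 2 x |>.congr_deriv (by ring)).div_const 2
      have : (1/(1+x) - 1 + (2*x)/2) = x ^ 2 / (1 + x) := by
        field_simp
        ring
      rw [this] at hd
      exact hd.hasDerivWithinAt
    · intro x hx
      rw [interior_Ici] at hx
      have : (0:ℝ) < x := hx
      positivity
  have h := key Set.self_mem_Ici (Set.mem_Ici.2 hx) hx
  simp only [hg] at h
  norm_num at h
  linarith

lemma lm_upper_exp {m s : ℝ} (hm : 0 < m) (hs : 0 < s) :
    -(s/(m+2*s)) * (m^2 + (2*(m*s) + 2*s^2))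
      + (-(m^2/2) * Real.log (1 - 2*(s/(m+2*s)))) ≤ -s^2 := by
  have hms : 0 < m + 2*s := by linarith
  set y : ℝ := 2*(s/(m+2*s)) with hy
  have hy0 : 0 ≤ y := by positivity
  have hy1 : y < 1 := by
    rw [hy, show 2*(s/(m+2*s)) = (2*s)/(m+2*s) by ring, div_lt_one hms]
    linarith
  have h1y : 1 - y = m / (m+2*s) := by
    rw [hy]; field_simp; ring
  have hlog := lm_log_ineq1 hy0 hy1
  have hnn : (0:ℝ) ≤ m^2/2 := by positivity
  have hmul := mul_le_mul_of_nonneg_left hlog hnn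
  have hid : (m^2/2) * (y + y^2/(2*(1-y)))
      = (s/(m+2*s))*(m^2 + (2*(m*s) + 2*s^2)) - s^2 := by
    rw [h1y, hy]
    field_simp
    ring
  nlinarith [hmul, hid]

lemma lm_lower_exp {m s : ℝ} (hs : 0 < s) (hms : 2*s ≤ m) :
    -(-(s/m)) * (m^2 - 2*(m*s))
      + (-(m^2/2) * Real.log (1 - 2*(-(s/m)))) ≤ -s^2 := by
  have hm : 0 < m := by linarith
  have hx0 : (0:ℝ) ≤ 2*(s/m) := by positivity
  have hlog := lm_log_ineq2 hx0
  have hnn : (0:ℝ) ≤ m^2/2 := by positivity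
  have hmul := mul_le_mul_of_nonneg_left hlog hnn
  have hrw : 1 - 2*(-(s/m)) = 1 + 2*(s/m) := by ring
  rw [hrw]
  have h1 : (m^2/2) * (2*(s/m) - (2*(s/m))^2/2) = m*s - s^2 := by
    field_simp
  have h2 : -(-(s/m)) * (m^2 - 2*(m*s)) = m*s - 2*s^2 := by
    field_simp
  nlinarith [hmul, h1, h2]

lemma inv_sqrt_pow_eq {a : ℝ} (ha : 0 < a) (d : ℕ) :
    ((Real.sqrt a)⁻¹) ^ d = Real.exp (-((d:ℝ)/2) * Real.log a) := by
  rw [Real.sqrt_eq_rpow, ← Real.rpow_neg ha.le, Real.rpow_def_of_pos ha, ← Real.exp_nat_mul]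
  congr 1
  ring

end scalar

section gauss

lemma gauss_pdf_mul (t : ℝ) (x : ℝ) :
    gaussianPDFReal 0 1 x * Real.exp (t * x ^ 2)
      = (Real.sqrt (2 * π))⁻¹ * Real.exp (-(1/2 - t) * x ^ 2) := by
  simp only [gaussianPDFReal, NNReal.coe_one, mul_one, sub_zero]
  rw [mul_assoc, ← Real.exp_add]
  ring_nf

lemma gauss_int (t : ℝ) (ht : t < 1/2) :
    (∫ x : ℝ, (Real.sqrt (2 * π))⁻¹ * Real.exp (-(1/2 - t) * x ^ 2))
      = (Real.sqrt (1 - 2 * t))⁻¹ := by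
  rw [integral_const_mul, integral_gaussian]
  have h2 : (0:ℝ) < 1/2 - t := by linarith
  have h3 : (0:ℝ) < 1 - 2*t := by linarith
  rw [show π / (1/2 - t) = 2 * π * (1 - 2*t)⁻¹ by field_simp]
  rw [Real.sqrt_mul (show (0:ℝ) ≤ 2*π by positivity), Real.sqrt_inv,
    Real.sqrt_mul (by norm_num : (0:ℝ) ≤ 2) π, ← mul_assoc,
    inv_mul_cancel₀ (by positivity), one_mul]

lemma gauss_integrable (t : ℝ) (ht : t < 1/2) :
    Integrable (fun x => Real.exp (t * x ^ 2)) (gaussianReal 0 1) := by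
  rw [gaussianReal_of_var_ne_zero 0 one_ne_zero]
  have h : (gaussianPDF 0 1) = fun x => ((Real.toNNReal (gaussianPDFReal 0 1 x) : ℝ≥0) : ℝ≥0∞) := by
    ext x; rfl
  rw [h, integrable_withDensity_iff_integrable_smul]
  · apply Integrable.congr ((integrable_exp_neg_mul_sq (by linarith : (0:ℝ) < 1/2 - t)).const_mul
      ((Real.sqrt (2 * π))⁻¹))
    filter_upwards with x
    rw [NNReal.smul_def, smul_eq_mul, Real.coe_toNNReal _ (gaussianPDFReal_nonneg 0 1 x),
      gauss_pdf_mul]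
  · exact (measurable_gaussianPDFReal 0 1).real_toNNReal

lemma gauss_integral (t : ℝ) (ht : t < 1/2) :
    ∫ x, Real.exp (t * x ^ 2) ∂(gaussianReal 0 1) = (Real.sqrt (1 - 2 * t))⁻¹ := by
  rw [gaussianReal_of_var_ne_zero 0 one_ne_zero]
  have h : (gaussianPDF 0 1) = fun x => ((Real.toNNReal (gaussianPDFReal 0 1 x) : ℝ≥0) : ℝ≥0∞) := by
    ext x; rfl
  rw [h, integral_withDensity_eq_integral_smul ((measurable_gaussianPDFReal 0 1).real_toNNReal)]
  rw [← gauss_int t ht]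
  congr 1 with x
  rw [NNReal.smul_def, smul_eq_mul, Real.coe_toNNReal _ (gaussianPDFReal_nonneg 0 1 x),
    gauss_pdf_mul]

end gauss

section mgf

variable {Ω : Type*} [MeasurableSpace Ω] {P : Measure Ω} [IsProbabilityMeasure P] {d : ℕ}

omit [IsProbabilityMeasure P] in
lemma chi_sq_int_one (Y : Ω → ℝ) (hY : Measurable Y)
    (hg : Measure.map Y P = gaussianReal 0 1) (t : ℝ) (ht : t < 1/2) :
    Integrable (fun ω => Real.exp (t * (Y ω) ^ 2)) P ∧
      ∫ ω, Real.exp (t * (Y ω) ^ 2) ∂P = (Real.sqrt (1 - 2 * t))⁻¹ := by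
  have hsm : AEStronglyMeasurable (fun x : ℝ => Real.exp (t * x ^ 2)) (Measure.map Y P) :=
    (Continuous.aestronglyMeasurable (by fun_prop))
  constructor
  · have h := gauss_integrable t ht
    rw [← hg] at h
    exact (integrable_map_measure hsm hY.aemeasurable).mp h
  · have h := gauss_integral t ht
    rw [← hg, integral_map hY.aemeasurable hsm] at h
    exact h

lemma chi_sq_mgf (Y : Fin d → Ω → ℝ) (hmeas : ∀ i, Measurable (Y i))
    (hindep : iIndepFun Y P)
    (hgauss : ∀ i, Measure.map (Y i) P = gaussianReal 0 1) (t : ℝ) (ht : t < 1/2) :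
    Integrable (fun ω => Real.exp (t * ∑ i, (Y i ω) ^ 2)) P ∧
      mgf (fun ω => ∑ i, (Y i ω) ^ 2) P t = Real.exp (-((d:ℝ)/2) * Real.log (1 - 2*t)) := by
  set S : Fin d → Ω → ℝ := fun i => (fun x : ℝ => x ^ 2) ∘ Y i with hS
  have hSmeas : ∀ i, Measurable (S i) := fun i => (measurable_id.pow_const 2).comp (hmeas i)
  have hSindep : iIndepFun S P :=
    hindep.comp _ (fun _ => measurable_id.pow_const 2)
  have hSsum : (∑ i, S i) = fun ω => ∑ i, (Y i ω) ^ 2 := by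
    ext ω
    simp [hS]
  have h_int : ∀ i ∈ Finset.univ, Integrable (fun ω => Real.exp (t * S i ω)) P := fun i _ =>
    (chi_sq_int_one (Y i) (hmeas i) (hgauss i) t ht).1
  have h3 : (0:ℝ) < 1 - 2*t := by linarith
  constructor
  · have h := hSindep.integrable_exp_mul_sum hSmeas h_int
    rw [hSsum] at h
    exact h
  · rw [← hSsum, hSindep.mgf_sum hSmeas]
    have hmgf : ∀ i : Fin d, mgf (S i) P t = (Real.sqrt (1 - 2 * t))⁻¹ := fun i =>
      (chi_sq_int_one (Y i) (hmeas i) (hgauss i) t ht).2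
    rw [Finset.prod_congr rfl (fun i _ => hmgf i), Finset.prod_const,
      Finset.card_univ, Fintype.card_fin, inv_sqrt_pow_eq h3]

end mgf

end LaurentMassartAux

/-- Laurent–Massart chi-squared concentration: if
`X = ∑_{i<d} Y_i²` with `Y_i` i.i.d. standard Gaussians, then with probability
at least `1 − 2δ`,
`−2√(d log(1/δ)) ≤ X − d ≤ 2√(d log(1/δ)) + 2 log(1/δ)`. -/
theorem chi_squared_concentration {Ω : Type*} [MeasurableSpace Ω]
    (P : Measure Ω) [IsProbabilityMeasure P] {d : ℕ}
    (Y : Fin d → Ω → ℝ) (hmeas : ∀ i, Measurable (Y i))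
    (hindep : iIndepFun Y P)
    (hgauss : ∀ i, Measure.map (Y i) P = gaussianReal 0 1)
    {δ : ℝ} (hδ0 : 0 < δ) (hδ1 : δ < 1) :
    1 - ENNReal.ofReal (2 * δ) ≤
      P {ω | -(2 * Real.sqrt (d * Real.log (1 / δ))) ≤ (∑ i, (Y i ω) ^ 2) - d ∧
        (∑ i, (Y i ω) ^ 2) - d ≤
          2 * Real.sqrt (d * Real.log (1 / δ)) + 2 * Real.log (1 / δ)} := by
  have h1δ : 1 < 1/δ := by rw [lt_div_iff₀ hδ0]; linarith
  by_cases hd : d = 0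
  · subst hd
    have hL0 : (0:ℝ) ≤ Real.log (1/δ) := Real.log_nonneg h1δ.le
    apply le_trans tsub_le_self
    apply le_of_eq
    symm
    rw [← measure_univ (μ := P)]
    congr 1
    ext ω
    simp only [Set.mem_setOf_eq, Set.mem_univ, iff_true, Finset.univ_eq_empty,
      Finset.sum_empty, Nat.cast_zero, zero_mul, Real.sqrt_zero, mul_zero, neg_zero,
      sub_zero, zero_sub]
    constructor <;> linarith
  · -- main case
    have hdpos : (0:ℝ) < (d:ℕ) := by exact_mod_cast Nat.pos_of_ne_zero hd
    have hL : 0 < Real.log (1/δ) := Real.log_pos h1δ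
    set L : ℝ := Real.log (1/δ) with hLdef
    set m : ℝ := Real.sqrt d with hmdef
    set s : ℝ := Real.sqrt L with hsdef
    have hm : 0 < m := Real.sqrt_pos.2 hdpos
    have hs : 0 < s := Real.sqrt_pos.2 hL
    have hm2 : m^2 = (d:ℝ) := Real.sq_sqrt hdpos.le
    have hs2 : s^2 = L := Real.sq_sqrt hL.le
    have hmsq : Real.sqrt ((d:ℝ) * L) = m * s := Real.sqrt_mul (Nat.cast_nonneg d) L
    have hδexp : Real.exp (-L) = δ := by
      rw [hLdef, one_div, Real.log_inv, neg_neg, Real.exp_log hδ0]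
    have hXmeas : Measurable (fun ω => ∑ i, (Y i ω)^2) := by
      apply Finset.measurable_sum
      intro i _
      exact (hmeas i).pow_const 2
    -- upper tail
    have hup : P {ω | (d:ℝ) + (2*(m*s) + 2*L) ≤ ∑ i, (Y i ω)^2} ≤ ENNReal.ofReal δ := by
      have ht0 : (0:ℝ) ≤ s/(m+2*s) := by positivity
      have ht : s/(m+2*s) < 1/2 := by
        rw [div_lt_iff₀ (by linarith : (0:ℝ) < m+2*s)]
        linarith
      obtain ⟨hint, hmgf⟩ := chi_sq_mgf Y hmeas hindep hgauss (s/(m+2*s)) ht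
      have hch : (P {ω | (d:ℝ) + (2*(m*s) + 2*L) ≤ ∑ i, (Y i ω)^2}).toReal ≤
          Real.exp (-(s/(m+2*s)) * ((d:ℝ) + (2*(m*s) + 2*L))) *
            mgf (fun ω => ∑ i, (Y i ω)^2) P (s/(m+2*s)) :=
        measure_ge_le_exp_mul_mgf ((d:ℝ) + (2*(m*s) + 2*L)) ht0 hint
      rw [hmgf, ← Real.exp_add] at hch
      have hexp : Real.exp (-(s/(m+2*s)) * ((d:ℝ) + (2*(m*s) + 2*L))
          + -((d:ℝ)/2) * Real.log (1 - 2*(s/(m+2*s)))) ≤ δ := by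
        rw [← hδexp]
        apply Real.exp_le_exp.mpr
        rw [← hm2, ← hs2]
        have := lm_upper_exp hm hs
        linarith
      have h1 := hch.trans hexp
      have h2 := ENNReal.ofReal_le_ofReal h1
      rwa [ENNReal.ofReal_toReal (measure_ne_top P _)] at h2
    -- lower tail
    have hlo : P {ω | ∑ i, (Y i ω)^2 ≤ (d:ℝ) - 2*(m*s)} ≤ ENNReal.ofReal δ := by
      by_cases hcase : m < 2*s
      · have hempty : {ω | ∑ i, (Y i ω)^2 ≤ (d:ℝ) - 2*(m*s)} = ∅ := by
          ext ω
          simp only [Set.mem_setOf_eq, Set.mem_empty_iff_false, iff_false, not_le]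
          have hXnn : (0:ℝ) ≤ ∑ i, (Y i ω)^2 := Finset.sum_nonneg (fun i _ => sq_nonneg _)
          nlinarith
        rw [hempty, measure_empty]
        exact zero_le
      · push_neg at hcase
        have ht0 : -(s/m) ≤ (0:ℝ) := neg_nonpos.mpr (by positivity)
        have ht : -(s/m) < 1/2 := by
          have : 0 < s/m := by positivity
          linarith
        obtain ⟨hint, hmgf⟩ := chi_sq_mgf Y hmeas hindep hgauss (-(s/m)) ht
        have hch : (P {ω | ∑ i, (Y i ω)^2 ≤ (d:ℝ) - 2*(m*s)}).toReal ≤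
            Real.exp (-(-(s/m)) * ((d:ℝ) - 2*(m*s))) *
              mgf (fun ω => ∑ i, (Y i ω)^2) P (-(s/m)) :=
          measure_le_le_exp_mul_mgf ((d:ℝ) - 2*(m*s)) ht0 hint
        rw [hmgf, ← Real.exp_add] at hch
        have hexp : Real.exp (-(-(s/m)) * ((d:ℝ) - 2*(m*s))
            + -((d:ℝ)/2) * Real.log (1 - 2*(-(s/m)))) ≤ δ := by
          rw [← hδexp]
          apply Real.exp_le_exp.mpr
          rw [← hm2]
          have := lm_lower_exp hs hcase
          linarith [hs2]
        have h1 := hch.trans hexp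
        have h2 := ENNReal.ofReal_le_ofReal h1
        rwa [ENNReal.ofReal_toReal (measure_ne_top P _)] at h2
    -- assemble
    set A := {ω | -(2 * Real.sqrt (d * L)) ≤ (∑ i, (Y i ω) ^ 2) - d ∧
        (∑ i, (Y i ω) ^ 2) - d ≤ 2 * Real.sqrt (d * L) + 2 * L} with hAdef
    have hAmeas : MeasurableSet A := by
      rw [hAdef, Set.setOf_and]
      exact (measurableSet_le measurable_const (hXmeas.sub measurable_const)).inter
        (measurableSet_le (hXmeas.sub measurable_const) measurable_const)
    have hsub : Aᶜ ⊆ {ω | ∑ i, (Y i ω)^2 ≤ (d:ℝ) - 2*(m*s)} ∪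
        {ω | (d:ℝ) + (2*(m*s) + 2*L) ≤ ∑ i, (Y i ω)^2} := by
      intro ω hω
      simp only [hAdef, Set.mem_compl_iff, Set.mem_setOf_eq, not_and_or, not_le,
        Set.mem_union, hmsq] at hω ⊢
      rcases hω with h | h
      · left; linarith
      · right; linarith
    rw [tsub_le_iff_right]
    calc (1:ℝ≥0∞) = P A + P Aᶜ := (prob_add_prob_compl hAmeas).symm
      _ ≤ P A + ENNReal.ofReal (2*δ) := by
          refine add_le_add le_rfl ?_
          calc P Aᶜ ≤ P ({ω | ∑ i, (Y i ω)^2 ≤ (d:ℝ) - 2*(m*s)} ∪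
              {ω | (d:ℝ) + (2*(m*s) + 2*L) ≤ ∑ i, (Y i ω)^2}) := measure_mono hsub
            _ ≤ P {ω | ∑ i, (Y i ω)^2 ≤ (d:ℝ) - 2*(m*s)} +
                P {ω | (d:ℝ) + (2*(m*s) + 2*L) ≤ ∑ i, (Y i ω)^2} := measure_union_le _ _
            _ ≤ ENNReal.ofReal δ + ENNReal.ofReal δ := add_le_add hlo hup
            _ = ENNReal.ofReal (2*δ) := by
                rw [← ENNReal.ofReal_add hδ0.le hδ0.le]
                norm_num [two_mul]
end
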